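/- For every element g = [A, σ_i] of PΓL(2, q^n), there exist a divisor t of n and a matrix C ∈ GL(2, q^n) such that g and h = [C, σ_t] generate the same cyclic subgroup of PΓL(2, q^n); consequently a monic irreducible polynomial f over F_{q^n} of degree ≥ 2 is fixed by g if and only if it is fixed by h. -/

import Mathlib

open Polynomial

/-- The Möbius substitution `A ∘ f (x) = (cx+d)^(deg f) f((ax+b)/(cx+d))` as a polynomial. -/
noncomputable def mobius {F : Type*} [Field F] (A : Matrix (Fin 2) (Fin 2) F) (f : F[X]) : F[X] :=
  ∑ i ∈ Finset.range (f.natDegree + 1),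
    C (f.coeff i) * (C (A 0 0) * X + C (A 0 1)) ^ i *
      (C (A 1 0) * X + C (A 1 1)) ^ (f.natDegree - i)

/-- The monic normalization `[A] ∘ f`. -/
noncomputable def mobiusN {F : Type*} [Field F] (A : Matrix (Fin 2) (Fin 2) F) (f : F[X]) : F[X] :=
  mobius A f * C (mobius A f).leadingCoeff⁻¹

/-- The `i`-th iterate of the `q`-Frobenius (`q = p^e`), i.e. `x ↦ x^(q^i)`. -/
noncomputable def frob (K : Type*) [Field K] (p e : ℕ) [Fact p.Prime] [CharP K p] (i : ℕ) :
    K →+* K :=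
  iterateFrobenius K p (e * i)

/-- The Möbius–Frobenius action `[A, σᵢ] * f = [A] ∘ σᵢ(f)`. -/
noncomputable def pact (K : Type*) [Field K] (p e : ℕ) [Fact p.Prime] [CharP K p]
    (A : Matrix (Fin 2) (Fin 2) K) (i : ℕ) (f : K[X]) : K[X] :=
  mobiusN A (f.map (frob K p e i))

/-- The twisted product `A · σᵢ(A) · σ₂ᵢ(A) ⋯ σ_{i(k-1)}(A)`. -/
noncomputable def conjProd (K : Type*) [Field K] (p e : ℕ) [Fact p.Prime] [CharP K p]
    (A : Matrix (Fin 2) (Fin 2) K) (i k : ℕ) : Matrix (Fin 2) (Fin 2) K :=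
  ((List.range k).map fun j => A.map (frob K p e (i * j))).prod

/-- `F_{B,m}(x) = b x^(q^m+1) - a x^(q^m) + d x - c` for `B = [[a,b],[c,d]]`. -/
noncomputable def FPoly (K : Type*) [Field K] (p e : ℕ)
    (B : Matrix (Fin 2) (Fin 2) K) (m : ℕ) : K[X] :=
  C (B 0 1) * X ^ (p ^ (e * m) + 1) - C (B 0 0) * X ^ (p ^ (e * m)) + C (B 1 1) * X - C (B 1 0)

/-- `F_{A,m,i}(x) = σ_{n-i}(F_{A_i^*, m-i}(x))` where `A_i^* = A σ₁(A) ⋯ σ_{i-1}(A)`. -/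
noncomputable def FA (K : Type*) [Field K] (p e n : ℕ) [Fact p.Prime] [CharP K p]
    (A : Matrix (Fin 2) (Fin 2) K) (m i : ℕ) : K[X] :=
  (FPoly K p e (conjProd K p e A 1 i) (m - i)).map (frob K p e (n - i))


namespace MF
variable {K : Type*} [Field K]

noncomputable def sub2 (m : ℕ) (f P Q : K[X]) : K[X] :=
  ∑ i ∈ Finset.range (m + 1), C (f.coeff i) * P ^ i * Q ^ (m - i)

noncomputable abbrev ι : K[X] →+* FractionRing K[X] := algebraMap K[X] (FractionRing K[X])

lemma ι_inj : Function.Injective (ι (K := K)) := IsFractionRing.injective K[X] (FractionRing K[X])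

lemma ι_ne_zero {Q : K[X]} (hQ : Q ≠ 0) : ι Q ≠ 0 := by
  intro h; exact hQ (ι_inj (by simpa using h))

lemma iota_sub2 {m : ℕ} {f P Q : K[X]} (hm : f.natDegree ≤ m) (hQ : Q ≠ 0) :
    ι (sub2 m f P Q) = ι Q ^ m * eval₂ ((ι (K := K)).comp C) (ι P / ι Q) f := by
  have hQ' : (ι Q : FractionRing K[X]) ≠ 0 := ι_ne_zero hQ
  rw [sub2, map_sum, eval₂_eq_sum_range' _ (Nat.lt_succ_of_le hm), Finset.mul_sum]
  refine Finset.sum_congr rfl fun j hj => ?_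
  have hjm : j ≤ m := Nat.lt_succ_iff.mp (Finset.mem_range.mp hj)
  rw [map_mul, map_mul, map_pow, map_pow, RingHom.comp_apply]
  rw [div_pow]
  rw [show (ι Q : FractionRing K[X]) ^ m = ι Q ^ (m - j) * ι Q ^ j by
    rw [← pow_add, Nat.sub_add_cancel hjm]]
  field_simp

lemma natDegree_sub2_le {m : ℕ} {f P Q : K[X]} (hP : P.natDegree ≤ 1) (hQ : Q.natDegree ≤ 1) :
    (sub2 m f P Q).natDegree ≤ m := by
  refine (natDegree_sum_le _ _).trans ?_
  rw [Finset.fold_max_le]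
  refine ⟨Nat.zero_le _, fun i hi => ?_⟩
  have him : i ≤ m := Nat.lt_succ_iff.mp (Finset.mem_range.mp hi)
  calc (C (f.coeff i) * P ^ i * Q ^ (m - i)).natDegree
      ≤ (C (f.coeff i) * P ^ i).natDegree + (Q ^ (m-i)).natDegree := natDegree_mul_le
    _ ≤ ((C (f.coeff i)).natDegree + (P ^ i).natDegree) + (Q ^ (m-i)).natDegree := by
        exact Nat.add_le_add_right natDegree_mul_le _
    _ ≤ (0 + i * 1) + (m - i) * 1 := by
        refine Nat.add_le_add (Nat.add_le_add (by simp) ?_) ?_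
        · exact natDegree_pow_le.trans (Nat.mul_le_mul_left _ hP)
        · exact natDegree_pow_le.trans (Nat.mul_le_mul_left _ hQ)
    _ ≤ m := by omega

lemma sub2_mul {u v P Q : K[X]} (hu : u ≠ 0) (hv : v ≠ 0) (hQ : Q ≠ 0) :
    sub2 (u.natDegree + v.natDegree) (u * v) P Q
      = sub2 u.natDegree u P Q * sub2 v.natDegree v P Q := by
  apply ι_inj
  rw [map_mul, iota_sub2 (by rw [natDegree_mul hu hv]) hQ, iota_sub2 le_rfl hQ,
    iota_sub2 le_rfl hQ, eval₂_mul, pow_add]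
  ring

lemma sub2_comp {m : ℕ} {f : K[X]} (hm : f.natDegree ≤ m) (a b c d : K) {P Q : K[X]}
    (hP : P.natDegree ≤ 1) (hQ1 : Q.natDegree ≤ 1) (hQ : Q ≠ 0) :
    sub2 m (sub2 m f (C a * X + C b) (C c * X + C d)) P Q
      = sub2 m f (C a * P + C b * Q) (C c * P + C d * Q) := by
  apply ι_inj
  have hg : (sub2 m f (C a * X + C b) (C c * X + C d)).natDegree ≤ m :=
    natDegree_sub2_le (natDegree_linear_le) (natDegree_linear_le)
  have hQ' : (ι Q : FractionRing K[X]) ≠ 0 := ι_ne_zero hQ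
  set z : FractionRing K[X] := ι P / ι Q with hz
  rw [iota_sub2 hg hQ]
  rw [sub2, sub2, map_sum, eval₂_finset_sum, Finset.mul_sum]
  refine Finset.sum_congr rfl fun j hj => ?_
  have hjm : j ≤ m := Nat.lt_succ_iff.mp (Finset.mem_range.mp hj)
  simp only [eval₂_mul, eval₂_pow, eval₂_add, eval₂_C, eval₂_X]
  rw [map_mul, map_mul, map_pow, map_pow]
  have e1 : ι (C a * P + C b * Q) = ι Q * ((ι (K := K)).comp C a * z + (ι (K := K)).comp C b) := by
    rw [hz]; field_simp; simp only [map_add, map_mul, RingHom.comp_apply]; ring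
  have e2 : ι (C c * P + C d * Q) = ι Q * ((ι (K := K)).comp C c * z + (ι (K := K)).comp C d) := by
    rw [hz]; field_simp; simp only [map_add, map_mul, RingHom.comp_apply]; ring
  rw [e1, e2, mul_pow, mul_pow, RingHom.comp_apply, RingHom.comp_apply, RingHom.comp_apply]
  rw [show (ι Q : FractionRing K[X]) ^ m = ι Q ^ j * ι Q ^ (m - j) by
    rw [← pow_add, Nat.add_sub_cancel' hjm]]
  ring


lemma natDegree_lin_le (a b : K) : (C a * X + C b).natDegree ≤ 1 := natDegree_linear_le

lemma coeff_linear_pow (a b : K) (i : ℕ) : ((C a * X + C b) ^ i).coeff i = a ^ i := by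
  have := coeff_pow_of_natDegree_le (p := C a * X + C b) (n := 1) (m := i) natDegree_linear_le
  simpa using this

lemma sub2_coeff_top (m : ℕ) (f : K[X]) (a b c d : K) :
    (∑ i ∈ Finset.range (m + 1),
      C (f.coeff i) * (C a * X + C b) ^ i * (C c * X + C d) ^ (m - i)).coeff m
      = ∑ i ∈ Finset.range (m + 1), f.coeff i * a ^ i * c ^ (m - i) := by
  rw [finset_sum_coeff]
  refine Finset.sum_congr rfl fun i hi => ?_
  have him : i ≤ m := Nat.lt_succ_iff.mp (Finset.mem_range.mp hi)
  have h1 : (C (f.coeff i) * (C a * X + C b) ^ i).natDegree ≤ i := by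
    refine natDegree_mul_le.trans ?_
    simpa using natDegree_pow_le.trans (Nat.mul_le_mul_left i (natDegree_lin_le a b))
  have h2 : ((C c * X + C d) ^ (m - i)).natDegree ≤ m - i :=
    natDegree_pow_le.trans (by simpa using Nat.mul_le_mul_left (m - i) (natDegree_lin_le c d))
  have hm : m = i + (m - i) := (Nat.add_sub_cancel' him).symm
  rw [hm, Nat.add_sub_cancel_left, coeff_mul_add_eq_of_natDegree_le h1 h2, coeff_C_mul, coeff_linear_pow, coeff_linear_pow]

lemma no_root {f : K[X]} (hirr : Irreducible f) (hdeg : 2 ≤ f.natDegree) (x : K) :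
    f.eval x ≠ 0 := by
  intro hx
  obtain ⟨g, hg⟩ := (dvd_iff_isRoot.mpr hx)
  rcases hirr.isUnit_or_isUnit hg with h | h
  · exact (not_isUnit_X_sub_C x) h
  · have hg0 : g ≠ 0 := by
      rintro rfl
      rw [mul_zero] at hg
      rw [hg] at hdeg; simp at hdeg
    have : f.natDegree = 1 := by
      rw [hg, natDegree_mul (X_sub_C_ne_zero x) hg0, natDegree_X_sub_C,
        natDegree_eq_zero_of_isUnit h]
    omega

lemma sum_top_ne_zero {f : K[X]} (hf : f.Monic) (hirr : Irreducible f) (hdeg : 2 ≤ f.natDegree)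
    {a c : K} (hac : ¬(a = 0 ∧ c = 0)) :
    ∑ i ∈ Finset.range (f.natDegree + 1), f.coeff i * a ^ i * c ^ (f.natDegree - i) ≠ 0 := by
  set m := f.natDegree with hm
  rcases eq_or_ne c 0 with rfl | hc
  · have ha : a ≠ 0 := fun h => hac ⟨h, rfl⟩
    rw [Finset.sum_eq_single m]
    · simp [hm, hf.coeff_natDegree, pow_ne_zero, ha]
    · intro i hi hne
      have : 0 < m - i := by
        have := Nat.lt_succ_iff.mp (Finset.mem_range.mp hi); omega
      have : m - i ≠ 0 := by omega
      simp [zero_pow this]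
    · intro h; simp at h
  · have key : ∑ i ∈ Finset.range (m + 1), f.coeff i * a ^ i * c ^ (m - i)
        = c ^ m * f.eval (a / c) := by
      rw [eval_eq_sum_range' (Nat.lt_succ_of_le le_rfl), Finset.mul_sum]
      refine Finset.sum_congr rfl fun j hj => ?_
      have hjm : j ≤ m := Nat.lt_succ_iff.mp (Finset.mem_range.mp hj)
      rw [div_pow, show (c : K) ^ m = c ^ (m - j) * c ^ j by rw [← pow_add, Nat.sub_add_cancel hjm]]
      field_simp
    rw [key]
    exact mul_ne_zero (pow_ne_zero _ hc) (no_root hirr hdeg _)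


-- ===== Part 3: mobius structure lemmas =====
def Good (f : K[X]) : Prop := f.Monic ∧ Irreducible f ∧ 2 ≤ f.natDegree

lemma mobiusN_def (A : Matrix (Fin 2) (Fin 2) K) (f : K[X]) :
    mobiusN A f = mobius A f * C (mobius A f).leadingCoeff⁻¹ := rfl

lemma mobius_eq (A : Matrix (Fin 2) (Fin 2) K) (f : K[X]) :
    mobius A f = sub2 f.natDegree f (C (A 0 0) * X + C (A 0 1)) (C (A 1 0) * X + C (A 1 1)) := rfl

lemma det_row {A : Matrix (Fin 2) (Fin 2) K} (hA : A.det ≠ 0) : ¬(A 1 0 = 0 ∧ A 1 1 = 0) := by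
  rintro ⟨h1, h2⟩; rw [Matrix.det_fin_two, h1, h2] at hA; simp at hA

lemma det_col {A : Matrix (Fin 2) (Fin 2) K} (hA : A.det ≠ 0) : ¬(A 0 0 = 0 ∧ A 1 0 = 0) := by
  rintro ⟨h1, h2⟩; rw [Matrix.det_fin_two, h1, h2] at hA; simp at hA

lemma lin_ne_zero {c d : K} (h : ¬(c = 0 ∧ d = 0)) : C c * X + C d ≠ 0 := by
  intro h0
  have hc : c = 0 := by
    have := congrArg (fun w => Polynomial.coeff w 1) h0
    simpa [coeff_C] using this
  have hd : d = 0 := by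
    have := congrArg (fun w => Polynomial.coeff w 0) h0
    simpa [coeff_C] using this
  exact h ⟨hc, hd⟩

lemma mobius_coeff_top {A : Matrix (Fin 2) (Fin 2) K} (hA : A.det ≠ 0) {f : K[X]}
    (hf : Good f) : (mobius A f).coeff f.natDegree ≠ 0 := by
  have : (mobius A f).coeff f.natDegree
      = ∑ i ∈ Finset.range (f.natDegree + 1),
          f.coeff i * A 0 0 ^ i * A 1 0 ^ (f.natDegree - i) :=
    sub2_coeff_top f.natDegree f (A 0 0) (A 0 1) (A 1 0) (A 1 1)
  rw [this]
  exact sum_top_ne_zero hf.1 hf.2.1 hf.2.2 (det_col hA)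

lemma mobius_natDegree_le (A : Matrix (Fin 2) (Fin 2) K) (f : K[X]) :
    (mobius A f).natDegree ≤ f.natDegree := by
  rw [mobius_eq]
  exact natDegree_sub2_le (natDegree_lin_le _ _) (natDegree_lin_le _ _)

lemma mobius_natDegree {A : Matrix (Fin 2) (Fin 2) K} (hA : A.det ≠ 0) {f : K[X]}
    (hf : Good f) : (mobius A f).natDegree = f.natDegree :=
  le_antisymm (mobius_natDegree_le A f) (le_natDegree_of_ne_zero (mobius_coeff_top hA hf))

lemma mobius_leadingCoeff_ne {A : Matrix (Fin 2) (Fin 2) K} (hA : A.det ≠ 0) {f : K[X]}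
    (hf : Good f) : (mobius A f).leadingCoeff ≠ 0 := by
  rw [leadingCoeff, mobius_natDegree hA hf]
  exact mobius_coeff_top hA hf

lemma mobius_ne_zero {A : Matrix (Fin 2) (Fin 2) K} (hA : A.det ≠ 0) {f : K[X]}
    (hf : Good f) : mobius A f ≠ 0 :=
  fun h => mobius_leadingCoeff_ne hA hf (by rw [h]; simp)

lemma mobiusN_monic {A : Matrix (Fin 2) (Fin 2) K} (hA : A.det ≠ 0) {f : K[X]}
    (hf : Good f) : (mobiusN A f).Monic := by
  have l := mobius_leadingCoeff_ne hA hf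
  rw [Monic, mobiusN, leadingCoeff_mul, leadingCoeff_C]
  exact mul_inv_cancel₀ l

lemma mobiusN_natDegree {A : Matrix (Fin 2) (Fin 2) K} (hA : A.det ≠ 0) {f : K[X]}
    (hf : Good f) : (mobiusN A f).natDegree = f.natDegree := by
  have l := mobius_leadingCoeff_ne hA hf
  rw [mobiusN, natDegree_mul_C (inv_ne_zero l), mobius_natDegree hA hf]

lemma sub2_smul (m : ℕ) (h : K[X]) (c : K) (P Q : K[X]) :
    sub2 m (h * C c) P Q = sub2 m h P Q * C c := by
  rw [sub2, sub2, Finset.sum_mul]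
  refine Finset.sum_congr rfl fun i _ => ?_
  rw [coeff_mul_C, C_mul]; ring

lemma mobius_smul (A : Matrix (Fin 2) (Fin 2) K) (h : K[X]) {c : K} (hc : c ≠ 0) :
    mobius A (h * C c) = mobius A h * C c := by
  rw [mobius_eq, mobius_eq, natDegree_mul_C hc, sub2_smul]

lemma mobiusN_smul (A : Matrix (Fin 2) (Fin 2) K) (h : K[X]) {c : K} (hc : c ≠ 0) :
    mobiusN A (h * C c) = mobiusN A h := by
  rw [mobiusN_def, mobiusN_def, mobius_smul A h hc, leadingCoeff_mul, leadingCoeff_C,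
    mul_assoc, ← C_mul, mul_inv_rev, ← mul_assoc c, mul_inv_cancel₀ hc, one_mul]

lemma mobius_mobius {A B : Matrix (Fin 2) (Fin 2) K} (hA : A.det ≠ 0) (hB : B.det ≠ 0)
    {f : K[X]} (hf : Good f) : mobius B (mobius A f) = mobius (A * B) f := by
  have hm := mobius_natDegree hA hf
  have hQ : C (B 1 0) * X + C (B 1 1) ≠ 0 := lin_ne_zero (det_row hB)
  rw [mobius_eq B, hm, mobius_eq A,
    sub2_comp le_rfl (A 0 0) (A 0 1) (A 1 0) (A 1 1) (natDegree_lin_le _ _)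
      (natDegree_lin_le _ _) hQ, mobius_eq]
  congr 1
  · rw [Matrix.mul_apply, Matrix.mul_apply, Fin.sum_univ_two, Fin.sum_univ_two,
      C_add, C_add, C_mul, C_mul, C_mul, C_mul]
    ring
  · rw [Matrix.mul_apply, Matrix.mul_apply, Fin.sum_univ_two, Fin.sum_univ_two,
      C_add, C_add, C_mul, C_mul, C_mul, C_mul]
    ring

lemma mobiusN_mobiusN {A B : Matrix (Fin 2) (Fin 2) K} (hA : A.det ≠ 0) (hB : B.det ≠ 0)
    {f : K[X]} (hf : Good f) : mobiusN B (mobiusN A f) = mobiusN (A * B) f := by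
  have l := mobius_leadingCoeff_ne hA hf
  rw [mobiusN_def A, mobiusN_smul B _ (inv_ne_zero l), mobiusN_def, mobiusN_def,
    mobius_mobius hA hB hf]

lemma mobiusN_one {f : K[X]} (hf : f.Monic) : mobiusN (1 : Matrix (Fin 2) (Fin 2) K) f = f := by
  have h1 : mobius (1 : Matrix (Fin 2) (Fin 2) K) f = f := by
    rw [mobius]
    have e00 : (1 : Matrix (Fin 2) (Fin 2) K) 0 0 = 1 := Matrix.one_apply_eq 0
    have e01 : (1 : Matrix (Fin 2) (Fin 2) K) 0 1 = 0 := Matrix.one_apply_ne (by decide)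
    have e10 : (1 : Matrix (Fin 2) (Fin 2) K) 1 0 = 0 := Matrix.one_apply_ne (by decide)
    have e11 : (1 : Matrix (Fin 2) (Fin 2) K) 1 1 = 1 := Matrix.one_apply_eq 1
    rw [e00, e01, e10, e11]
    simp only [map_one, map_zero, one_mul, add_zero, zero_mul, zero_add, one_pow, mul_one]
    simp only [C_mul_X_pow_eq_monomial]
    exact (as_sum_range' f _ (Nat.lt_succ_self _)).symm
  rw [mobiusN, h1, hf.leadingCoeff]
  simp

lemma isUnit_of_natDegree_zero {w : K[X]} (h0 : w ≠ 0) (h : w.natDegree = 0) : IsUnit w := by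
  obtain ⟨a, rfl⟩ := natDegree_eq_zero.mp h
  exact isUnit_C.mpr (isUnit_iff_ne_zero.mpr (by rintro rfl; simp at h0))

lemma mobiusN_good {A : Matrix (Fin 2) (Fin 2) K} (hA : A.det ≠ 0) {f : K[X]}
    (hf : Good f) : Good (mobiusN A f) := by
  have hdeg := mobiusN_natDegree hA hf
  have hmon := mobiusN_monic hA hf
  have hAdet : IsUnit A.det := isUnit_iff_ne_zero.mpr hA
  have hAAi : A * A⁻¹ = 1 := Matrix.mul_nonsing_inv A hAdet
  have hAi : A⁻¹.det ≠ 0 := by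
    have h1 : A⁻¹.det * A.det = 1 := by
      rw [← Matrix.det_mul, Matrix.nonsing_inv_mul A hAdet, Matrix.det_one]
    intro h; rw [h, zero_mul] at h1; exact zero_ne_one h1
  have hback : mobiusN A⁻¹ (mobiusN A f) = f := by
    rw [mobiusN_mobiusN hA hAi hf, hAAi, mobiusN_one hf.1]
  refine ⟨hmon, ⟨?_, ?_⟩, by rw [hdeg]; exact hf.2.2⟩
  · intro hu
    have h1 := natDegree_eq_zero_of_isUnit hu
    have h2 := hf.2.2
    rw [hdeg] at h1
    omega
  · intro u v huv
    have hg0 : mobiusN A f ≠ 0 := hmon.ne_zero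
    have hu0 : u ≠ 0 := by rintro rfl; rw [zero_mul] at huv; exact hg0 huv
    have hv0 : v ≠ 0 := by rintro rfl; rw [mul_zero] at huv; exact hg0 huv
    have hQ : C (A⁻¹ 1 0) * X + C (A⁻¹ 1 1) ≠ 0 := lin_ne_zero (det_row hAi)
    have hmul : mobius A⁻¹ (u * v) = mobius A⁻¹ u * mobius A⁻¹ v := by
      rw [mobius_eq, mobius_eq, mobius_eq, natDegree_mul hu0 hv0]
      exact sub2_mul hu0 hv0 hQ
    set cc := (mobius A⁻¹ (u * v)).leadingCoeff⁻¹ with hcc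
    have hfeq : f = (mobius A⁻¹ u * mobius A⁻¹ v) * C cc := by
      rw [← hback, huv, mobiusN, ← hmul, ← hcc]
    have hcc0 : cc ≠ 0 := by
      rintro h
      rw [h, map_zero, mul_zero] at hfeq
      exact hf.1.ne_zero hfeq
    have hdegsum : u.natDegree + v.natDegree = f.natDegree := by
      rw [← natDegree_mul hu0 hv0, ← huv, hdeg]
    have hfeq' : f = (mobius A⁻¹ u * C cc) * mobius A⁻¹ v := by rw [hfeq]; ring
    rcases hf.2.1.isUnit_or_isUnit hfeq' with h | h
    · left
      have h0 := natDegree_eq_zero_of_isUnit h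
      have hle : f.natDegree ≤ v.natDegree := by
        calc f.natDegree = ((mobius A⁻¹ u * C cc) * mobius A⁻¹ v).natDegree := by rw [← hfeq']
          _ ≤ (mobius A⁻¹ u * C cc).natDegree + (mobius A⁻¹ v).natDegree := natDegree_mul_le
          _ ≤ 0 + v.natDegree := by
              rw [h0]; exact Nat.add_le_add_left (mobius_natDegree_le _ _) 0
          _ = v.natDegree := by omega
      have hu' : u.natDegree = 0 := by omega
      exact isUnit_of_natDegree_zero hu0 hu'
    · right
      have h0 := natDegree_eq_zero_of_isUnit h
      have hle : f.natDegree ≤ u.natDegree := by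
        calc f.natDegree = ((mobius A⁻¹ u * C cc) * mobius A⁻¹ v).natDegree := by rw [← hfeq']
          _ ≤ (mobius A⁻¹ u * C cc).natDegree + (mobius A⁻¹ v).natDegree := natDegree_mul_le
          _ ≤ (mobius A⁻¹ u).natDegree + 0 := by
              rw [h0]; exact Nat.add_le_add_right (natDegree_mul_C_le _ _) 0
          _ ≤ u.natDegree + 0 := Nat.add_le_add_right (mobius_natDegree_le _ _) 0
          _ = u.natDegree := by omega
      have hv' : v.natDegree = 0 := by omega
      exact isUnit_of_natDegree_zero hv0 hv'

-- ===== Part 4: frobenius / map / pact lemmas =====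
section PE
variable (p e n : ℕ) [Fact p.Prime] [CharP K p]

lemma frob_injective (i : ℕ) : Function.Injective (frob K p e i) :=
  (frob K p e i).injective

lemma frob_comp (a b : ℕ) : (frob K p e a).comp (frob K p e b) = frob K p e (a + b) := by
  rw [frob, frob, frob, Nat.mul_add, iterateFrobenius_add]

lemma frob_zero : frob K p e 0 = RingHom.id K := by
  rw [frob, Nat.mul_zero, iterateFrobenius_zero]

lemma frob_ne_zero (i : ℕ) {x : K} (hx : x ≠ 0) : frob K p e i x ≠ 0 := by
  intro h
  exact hx (frob_injective p e i (by rw [h, map_zero]))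

variable [Fintype K]

lemma frob_bijective (i : ℕ) : Function.Bijective (frob K p e i) :=
  Finite.injective_iff_bijective.mp (frob_injective p e i)

lemma frob_n (hK : Fintype.card K = p ^ (e * n)) : frob K p e n = RingHom.id K := by
  ext x
  rw [frob, iterateFrobenius_def, ← hK, RingHom.id_apply]
  exact FiniteField.pow_card x

lemma frob_add_n (hK : Fintype.card K = p ^ (e * n)) (a : ℕ) :
    frob K p e (a + n) = frob K p e a := by
  rw [← frob_comp, frob_n p e n hK, RingHom.comp_id]

lemma frob_add_nmul (hK : Fintype.card K = p ^ (e * n)) (a q : ℕ) :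
    frob K p e (a + n * q) = frob K p e a := by
  induction q with
  | zero => simp
  | succ q ih => rw [Nat.mul_succ, ← Nat.add_assoc, frob_add_n p e n hK, ih]

lemma frob_mod (hK : Fintype.card K = p ^ (e * n)) (a : ℕ) :
    frob K p e a = frob K p e (a % n) := by
  conv_lhs => rw [← Nat.mod_add_div a n]
  exact frob_add_nmul p e n hK _ _

lemma frob_congr (hK : Fintype.card K = p ^ (e * n)) {a b : ℕ} (h : a % n = b % n) :
    frob K p e a = frob K p e b := by
  rw [frob_mod p e n hK a, frob_mod p e n hK b, h]

lemma good_map (i : ℕ) {f : K[X]} (hf : Good f) : Good (f.map (frob K p e i)) := by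
  set σ := frob K p e i with hσ
  have hb : Function.Bijective ⇑σ := frob_bijective p e i
  set E : K ≃+* K := RingEquiv.ofBijective σ hb with hE
  have hcoe : (E : K →+* K) = σ := RingHom.ext fun x => rfl
  refine ⟨hf.1.map σ, ?_, ?_⟩
  · have : f.map σ = Polynomial.mapEquiv E f := by
      rw [Polynomial.mapEquiv, RingEquiv.ofRingHom_apply, coe_mapRingHom, hcoe]
    rw [this]
    exact (MulEquiv.irreducible_iff (Polynomial.mapEquiv E)).mpr hf.2.1
  · rw [natDegree_map σ]
    exact hf.2.2

end PE

lemma mobius_map (σ : K →+* K) (A : Matrix (Fin 2) (Fin 2) K) (f : K[X]) :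
    (mobius A f).map σ = mobius (A.map σ) (f.map σ) := by
  rw [mobius_eq, mobius_eq, natDegree_map σ, sub2, sub2, Polynomial.map_sum]
  refine Finset.sum_congr rfl fun i _ => ?_
  simp only [Polynomial.map_mul, Polynomial.map_pow, Polynomial.map_add, map_C, map_X,
    coeff_map, Matrix.map_apply]

lemma mobiusN_map (σ : K →+* K) (A : Matrix (Fin 2) (Fin 2) K) (f : K[X]) :
    (mobiusN A f).map σ = mobiusN (A.map σ) (f.map σ) := by
  rw [mobiusN_def, mobiusN_def, Polynomial.map_mul, map_C, map_inv₀]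
  rw [mobius_map, ← mobius_map, leadingCoeff_map]

section PACT
variable (p e n : ℕ) [Fact p.Prime] [CharP K p] [Fintype K]

lemma pact_def (A : Matrix (Fin 2) (Fin 2) K) (i : ℕ) (f : K[X]) :
    pact K p e A i f = mobiusN A (f.map (frob K p e i)) := rfl

lemma det_map_ne (j : ℕ) {A : Matrix (Fin 2) (Fin 2) K} (hA : A.det ≠ 0) :
    (A.map (frob K p e j)).det ≠ 0 := by
  rw [show A.map ⇑(frob K p e j) = (frob K p e j).mapMatrix A from rfl, ← RingHom.map_det]
  exact frob_ne_zero p e j hA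

lemma pact_good {A : Matrix (Fin 2) (Fin 2) K} (hA : A.det ≠ 0) (i : ℕ) {f : K[X]}
    (hf : Good f) : Good (pact K p e A i f) :=
  mobiusN_good hA (good_map p e i hf)

lemma pact_comp {A B : Matrix (Fin 2) (Fin 2) K} (hA : A.det ≠ 0) (hB : B.det ≠ 0)
    (a b : ℕ) {f : K[X]} (hf : Good f) :
    pact K p e B b (pact K p e A a f)
      = pact K p e (A.map (frob K p e b) * B) (a + b) f := by
  rw [pact_def, pact_def, pact_def, mobiusN_map, Polynomial.map_map, frob_comp,
    mobiusN_mobiusN (det_map_ne p e b hA) hB (by rw [Nat.add_comm b a]; exact good_map p e (a+b) hf)]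
  rw [Nat.add_comm b a]

lemma pact_id {j : ℕ} (hj : frob K p e j = RingHom.id K) {f : K[X]} (hf : f.Monic) :
    pact K p e (1 : Matrix (Fin 2) (Fin 2) K) j f = f := by
  rw [pact_def, hj, Polynomial.map_id, mobiusN_one hf]

end PACT

-- ===== Part 5: iteration =====
section ITER
variable (p e : ℕ) [Fact p.Prime] [CharP K p] [Fintype K]

noncomputable def Dmat (A : Matrix (Fin 2) (Fin 2) K) (i : ℕ) : ℕ → Matrix (Fin 2) (Fin 2) K
  | 0 => 1
  | k + 1 => (Dmat A i k).map (frob K p e i) * A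

lemma Dmat_det {A : Matrix (Fin 2) (Fin 2) K} (hA : A.det ≠ 0) (i : ℕ) :
    ∀ k, (Dmat p e A i k).det ≠ 0
  | 0 => by rw [Dmat, Matrix.det_one]; exact one_ne_zero
  | k + 1 => by
      rw [Dmat, Matrix.det_mul]
      exact mul_ne_zero (det_map_ne p e i (Dmat_det hA i k)) hA

lemma pact_iter {A : Matrix (Fin 2) (Fin 2) K} (hA : A.det ≠ 0) (i : ℕ) {f : K[X]}
    (hf : Good f) : ∀ k, (pact K p e A i)^[k] f = pact K p e (Dmat p e A i k) (k * i) f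
  | 0 => by
      rw [Function.iterate_zero_apply, Dmat, Nat.zero_mul]
      exact (pact_id p e (frob_zero p e) hf.1).symm
  | k + 1 => by
      rw [Function.iterate_succ_apply', pact_iter hA i hf k,
        pact_comp p e (Dmat_det p e hA i k) hA (k * i) i hf, Dmat, Nat.succ_mul]

end ITER
end MF

open MF

theorem stmt5 (p e n : ℕ) [Fact p.Prime] (he : 0 < e) (hn : 0 < n)
    (K : Type*) [Field K] [Fintype K] [CharP K p] (hK : Fintype.card K = p ^ (e * n))
    (A : Matrix (Fin 2) (Fin 2) K) (hA : A.det ≠ 0) (i : ℕ) :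
    ∃ (t : ℕ) (C : Matrix (Fin 2) (Fin 2) K), t ∣ n ∧ C.det ≠ 0 ∧
      ∀ f : K[X], f.Monic → Irreducible f → 2 ≤ f.natDegree →
        (pact K p e A i f = f ↔ pact K p e C t f = f) := by
  classical
  set t := Nat.gcd i n with htdef
  have htn : t ∣ n := Nat.gcd_dvd_right i n
  have hti : t ∣ i := Nat.gcd_dvd_left i n
  have htpos : 0 < t := Nat.pos_of_ne_zero fun h => by
    have := (Nat.gcd_eq_zero_iff.mp h).2; omega
  set i₂ := i / t with hi2def
  set n₂ := n / t with hn2def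
  have hi2 : i = t * i₂ := (Nat.mul_div_cancel' hti).symm
  have hn2 : n = t * n₂ := (Nat.mul_div_cancel' htn).symm
  have hn₂pos : 0 < n₂ := by
    rcases Nat.eq_zero_or_pos n₂ with h | h
    · rw [h, Nat.mul_zero] at hn2; omega
    · exact h
  have hsi_mod : (n₂ * i) % n = 0 := by
    have h1 : n₂ * i = n * i₂ := by rw [hi2, hn2]; ring
    rw [h1]; exact Nat.mul_mod_right n i₂
  -- the matrix Ds = Dmat n₂ and its multiplicative order
  set Ds := Dmat p e A i n₂ with hDsdef
  have hDsdet : Ds.det ≠ 0 := Dmat_det p e hA i n₂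
  obtain ⟨w, hw⟩ : IsUnit Ds := (Matrix.isUnit_iff_isUnit_det Ds).mpr (isUnit_iff_ne_zero.mpr hDsdet)
  set r := orderOf w with hrdef
  have hrpos : 0 < r := orderOf_pos w
  have hwr : Ds ^ r = 1 := by
    have h1 := pow_orderOf_eq_one w
    calc Ds ^ r = ((w ^ r : (Matrix (Fin 2) (Fin 2) K)ˣ) : Matrix (Fin 2) (Fin 2) K) := by
          rw [Units.val_pow_eq_pow_val, hw]
      _ = 1 := by rw [h1, Units.val_one]
  set N := n₂ * r with hNdef
  have hNpos : 0 < N := Nat.mul_pos hn₂pos hrpos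
  set T := pact K p e A i with hTdef
  -- T^[n₂] on good polynomials is the pure matrix action of Ds
  have hTs : ∀ f : K[X], Good f → T^[n₂] f = pact K p e Ds 0 f := by
    intro f hf
    rw [hTdef, pact_iter p e hA i hf n₂, pact_def, pact_def,
      frob_congr p e n hK (a := n₂ * i) (b := 0) (by rw [hsi_mod, Nat.zero_mod])]
  have hTpow : ∀ j : ℕ, ∀ f : K[X], Good f → (T^[n₂])^[j] f = pact K p e (Ds ^ j) 0 f := by
    intro j
    induction j with
    | zero =>
        intro f hf
        rw [Function.iterate_zero_apply, pow_zero]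
        exact (pact_id p e (frob_zero p e) hf.1).symm
    | succ j ih =>
        intro f hf
        have hDj : (Ds ^ j).det ≠ 0 := by
          rw [Matrix.det_pow]; exact pow_ne_zero _ hDsdet
        have hgoodj : Good (pact K p e (Ds ^ j) 0 f) := pact_good p e hDj 0 hf
        rw [Function.iterate_succ_apply', ih f hf, hTs _ hgoodj,
          pact_comp p e hDj hDsdet 0 0 hf]
        have hmap : (Ds ^ j).map ⇑(frob K p e 0) = Ds ^ j := by
          rw [frob_zero p e]
          ext a b
          simp [Matrix.map_apply]
        rw [hmap, ← pow_succ]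
  have hTN : ∀ f : K[X], Good f → T^[N] f = f := by
    intro f hf
    rw [hNdef, Function.iterate_mul, hTpow r f hf, hwr]
    exact pact_id p e (frob_zero p e) hf.1
  -- Bezout: find u with u * i ≡ t [MOD n]
  haveI : NeZero n := ⟨hn.ne'⟩
  obtain ⟨u, hu⟩ : ∃ u : ℕ, u * i ≡ t [MOD n] := by
    refine ⟨((Nat.gcdA i n : ZMod n)).val, ?_⟩
    rw [← ZMod.natCast_eq_natCast_iff]
    have hbez := Nat.gcd_eq_gcd_ab i n
    have hcast := congrArg (fun z : ℤ => (z : ZMod n)) hbez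
    push_cast at hcast
    rw [ZMod.natCast_self, zero_mul, add_zero] at hcast
    push_cast
    rw [ZMod.natCast_rightInverse _]
    rw [← htdef] at hcast
    rw [mul_comm]
    exact hcast.symm
  -- u is invertible mod n₂
  have hu2 : u * i₂ ≡ 1 [MOD n₂] := by
    refine Nat.ModEq.mul_right_cancel' htpos.ne' ?_
    have h1 : u * i₂ * t = u * i := by rw [hi2]; ring
    have h2 : 1 * t = t := one_mul t
    have h3 : n₂ * t = n := by rw [hn2]; ring
    rw [h1, h2, h3]
    exact hu
  have hucop : Nat.Coprime u n₂ := by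
    refine (ZMod.isUnit_iff_coprime u n₂).mp ?_
    refine IsUnit.of_mul_eq_one ((i₂ : ℕ) : ZMod n₂) ?_
    have := (ZMod.natCast_eq_natCast_iff _ _ _).mpr hu2
    push_cast at this
    exact this
  -- lift u to a unit mod M := n₂ * N, obtaining k coprime to N with k ≡ u [MOD n₂]
  set M := n₂ * N with hMdef
  have hMpos : 0 < M := Nat.mul_pos hn₂pos hNpos
  haveI : NeZero M := ⟨hMpos.ne'⟩
  have hdvd : n₂ ∣ M := ⟨N, rfl⟩
  obtain ⟨wU, hwU⟩ := ZMod.unitsMap_surjective hdvd (ZMod.unitOfCoprime u hucop)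
  set k0 := ((wU : ZMod M)).val with hk0def
  have hk0M : Nat.Coprime k0 M := ZMod.val_coe_unit_coprime wU
  set k := k0 + M with hkdef
  have hkM : Nat.Coprime k M := by
    rw [hkdef]
    exact (Nat.coprime_add_self_left).mpr hk0M
  have hkN : Nat.Coprime k N := Nat.Coprime.coprime_dvd_right ⟨n₂, by rw [hMdef]; ring⟩ hkM
  have hkpos : 0 < k := by omega
  have hkn₂ : k ≡ u [MOD n₂] := by
    have h1 : k ≡ k0 [MOD n₂] := by
      have hM0 : M ≡ 0 [MOD n₂] := (Nat.modEq_zero_iff_dvd).mpr hdvd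
      calc k = k0 + M := hkdef
        _ ≡ k0 + 0 [MOD n₂] := (Nat.ModEq.refl k0).add hM0
        _ = k0 := by omega
    have h2 : k0 ≡ u [MOD n₂] := by
      rw [← ZMod.natCast_eq_natCast_iff]
      have hv : ((k0 : ℕ) : ZMod M) = ↑wU := ZMod.natCast_rightInverse _
      calc ((k0 : ℕ) : ZMod n₂)
          = ZMod.castHom hdvd (ZMod n₂) ((k0 : ℕ) : ZMod M) := (map_natCast _ _).symm
        _ = ZMod.castHom hdvd (ZMod n₂) ↑wU := by rw [hv]
        _ = ↑(ZMod.unitsMap hdvd wU) := rfl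
        _ = ↑(ZMod.unitOfCoprime u hucop) := by rw [hwU]
        _ = ((u : ℕ) : ZMod n₂) := ZMod.coe_unitOfCoprime u hucop
    exact h1.trans h2
  have hkit : k * i ≡ t [MOD n] := by
    have h1 : k * t ≡ u * t [MOD n₂ * t] := Nat.ModEq.mul_right' t hkn₂
    have h2 : k * t * i₂ ≡ u * t * i₂ [MOD n₂ * t] := h1.mul_right i₂
    have h3 : n₂ * t = n := by rw [hn2]; ring
    have h4 : k * t * i₂ = k * i := by rw [hi2]; ring
    have h5 : u * t * i₂ = u * i := by rw [hi2]; ring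
    rw [h3, h4, h5] at h2
    exact h2.trans hu
  -- inverse of k mod N
  obtain ⟨k', hkk', hkk1⟩ : ∃ k', k * k' ≡ 1 [MOD N] ∧ 1 ≤ k * k' := by
    rcases eq_or_lt_of_le (Nat.one_le_iff_ne_zero.mpr hNpos.ne') with h1 | h1
    · exact ⟨1, by rw [← h1]; exact Nat.modEq_one, by omega⟩
    · obtain ⟨m, -, hm⟩ := Nat.exists_mul_mod_eq_one_of_coprime hkN h1
      refine ⟨m, ?_, ?_⟩
      · rw [Nat.ModEq, hm, Nat.mod_eq_of_lt h1]
      · rcases Nat.eq_zero_or_pos (k * m) with h | h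
        · exfalso; rw [h] at hm; simp at hm
        · exact h
  obtain ⟨j, hj⟩ : ∃ j, k * k' = 1 + N * j := by
    obtain ⟨j, hjj⟩ := (Nat.modEq_iff_dvd' hkk1).mp hkk'.symm
    exact ⟨j, by omega⟩
  -- conclusion
  refine ⟨t, Dmat p e A i k, htn, Dmat_det p e hA i k, ?_⟩
  intro f hmon hirr hdeg
  have hf : Good f := ⟨hmon, hirr, hdeg⟩
  have hiter : T^[k] f = pact K p e (Dmat p e A i k) t f := by
    rw [hTdef, pact_iter p e hA i hf k, pact_def, pact_def, frob_congr p e n hK hkit]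
  constructor
  · intro h
    rw [← hiter]
    exact Function.iterate_fixed h k
  · intro h
    rw [← hiter] at h
    have h2 : T^[k * k'] f = f := by
      rw [Function.iterate_mul]
      exact Function.iterate_fixed h k'
    rw [hj, Function.iterate_add_apply, Function.iterate_mul,
      Function.iterate_fixed (hTN f hf) j, Function.iterate_one] at h2
    exact h2
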